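/- Let k ≥ 1 be a natural number, λ₂ > 0, σ : Fin k → ℝ positive and nonincreasing, and c : ℕ → ℝ positive. Define β : ℕ → Fin k → ℝ by β₀(j) = 1/√k for all j and β_{i+1}(j) = ((σ_j β_i(j))² + λ₂)/(c_i σ_j² β_i(j)). Then for every i ∈ ℕ: each β_i(j) is positive, the map j ↦ β_i(j) is nondecreasing, and the map j ↦ σ_j² β_i(j) is nonincreasing. In particular, for all i and all indices j ≥ j', β_i(j) ≥ β_i(j'). -/

import Mathlib

/-- The paper's Theorem 2 in full sequence form: in the reformulated AOP iteration
with nonincreasing singular values, uniform initialization `β₀(j) = 1/√k` and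
positive normalization constants, each `β_i(j)` is positive, `j ↦ β_i(j)` is
nondecreasing and `j ↦ σ_j² β_i(j)` is nonincreasing at every iteration. -/
theorem aop_iteration_order_invariants
    (k : ℕ) (hk : 1 ≤ k) (lam2 : ℝ) (hlam2 : 0 < lam2)
    (σ : Fin k → ℝ) (hσpos : ∀ j, 0 < σ j) (hσanti : Antitone σ)
    (c : ℕ → ℝ) (hc : ∀ i, 0 < c i)
    (β : ℕ → Fin k → ℝ)
    (hβ0 : ∀ j, β 0 j = 1 / Real.sqrt k)
    (hβsucc : ∀ i j, β (i + 1) j = ((σ j * β i j) ^ 2 + lam2) / (c i * σ j ^ 2 * β i j)) :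
    ∀ i : ℕ,
      (∀ j, 0 < β i j) ∧
      Monotone (β i) ∧
      Antitone (fun j => σ j ^ 2 * β i j) ∧
      (∀ j j' : Fin k, j' ≤ j → β i j' ≤ β i j) := by
  have hσsq : ∀ j, 0 < σ j ^ 2 := fun j => pow_pos (hσpos j) 2
  intro i
  induction i with
  | zero =>
    have hkpos : (0 : ℝ) < Real.sqrt k := Real.sqrt_pos.mpr (by exact_mod_cast hk)
    have hpos : ∀ j, 0 < β 0 j := fun j => by rw [hβ0 j]; positivity
    refine ⟨hpos, ?_, ?_, ?_⟩
    · intro a b _; rw [hβ0, hβ0]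
    · intro a b hab
      simp only [hβ0]
      have : σ b ^ 2 ≤ σ a ^ 2 :=
        pow_le_pow_left₀ (le_of_lt (hσpos b)) (hσanti hab) 2
      exact mul_le_mul_of_nonneg_right this (by positivity)
    · intro a b hab; rw [hβ0, hβ0]
  | succ i ih =>
    obtain ⟨hpos, hmono, hanti, _⟩ := ih
    have hci := hc i
    -- rewrite the recursion as a sum of two terms
    have key : ∀ j, β (i + 1) j = β i j / c i + lam2 / (c i * (σ j ^ 2 * β i j)) := by
      intro j
      rw [hβsucc i j]
      have h1 : σ j ^ 2 ≠ 0 := ne_of_gt (hσsq j)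
      have h2 : β i j ≠ 0 := ne_of_gt (hpos j)
      have h3 : c i ≠ 0 := ne_of_gt hci
      have h0 : σ j ≠ 0 := ne_of_gt (hσpos j)
      field_simp
    have hApos : ∀ j, 0 < σ j ^ 2 * β i j := fun j => mul_pos (hσsq j) (hpos j)
    have hpos' : ∀ j, 0 < β (i + 1) j := by
      intro j
      rw [key j]
      exact add_pos (div_pos (hpos j) hci) (div_pos hlam2 (mul_pos hci (hApos j)))
    have hmono' : ∀ a b : Fin k, a ≤ b → β (i + 1) a ≤ β (i + 1) b := by
      intro a b hab
      rw [key a, key b]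
      have h1 : β i a / c i ≤ β i b / c i :=
        div_le_div_of_nonneg_right (hmono hab) hci.le
      have h2 : lam2 / (c i * (σ a ^ 2 * β i a)) ≤ lam2 / (c i * (σ b ^ 2 * β i b)) := by
        apply div_le_div_of_nonneg_left (le_of_lt hlam2) (mul_pos hci (hApos b))
        exact mul_le_mul_of_nonneg_left (hanti hab) (le_of_lt hci)
      linarith
    have hanti' : ∀ a b : Fin k, a ≤ b →
        σ b ^ 2 * β (i + 1) b ≤ σ a ^ 2 * β (i + 1) a := by
      intro a b hab
      have keyA : ∀ j, σ j ^ 2 * β (i + 1) j =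
          (σ j ^ 2 * β i j) / c i + lam2 / (c i * β i j) := by
        intro j
        rw [key j]
        have h1 : σ j ^ 2 ≠ 0 := ne_of_gt (hσsq j)
        have h2 : β i j ≠ 0 := ne_of_gt (hpos j)
        have h3 : c i ≠ 0 := ne_of_gt hci
        have h0 : σ j ≠ 0 := ne_of_gt (hσpos j)
        field_simp
      rw [keyA a, keyA b]
      have h1 : (σ b ^ 2 * β i b) / c i ≤ (σ a ^ 2 * β i a) / c i :=
        div_le_div_of_nonneg_right (hanti hab) hci.le
      have h2 : lam2 / (c i * β i b) ≤ lam2 / (c i * β i a) := by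
        apply div_le_div_of_nonneg_left (le_of_lt hlam2) (mul_pos hci (hpos a))
        exact mul_le_mul_of_nonneg_left (hmono hab) (le_of_lt hci)
      linarith
    exact ⟨hpos', fun a b hab => hmono' a b hab, fun a b hab => hanti' a b hab,
      fun j j' h => hmono' j' j h⟩
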